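/- For t ∈ ℝ define g_t : ℝ → ℝ by g_t(x) = sign(t + x)/(1 + (t + x)²). Then for every Lebesgue-null set N ⊆ ℝ, the family {g_t : t ∈ ℝ∖N}, viewed as a subset of L^∞(ℝ) (i.e. as equivalence classes modulo equality almost everywhere, with the essential supremum distance), admits no countable dense subset; that is, it is not separable in L^∞(ℝ). -/

import Mathlib

open MeasureTheory
open scoped ENNReal

private lemma ess_swap (a b : ℝ → ℝ) :
    eLpNormEssSup (fun x => a x - b x) (volume : Measure ℝ)
      = eLpNormEssSup (fun x => b x - a x) volume := by
  simp only [eLpNormEssSup]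
  congr 1; ext x
  rw [← ofReal_norm_eq_enorm, ← ofReal_norm_eq_enorm, norm_sub_rev]

private lemma sep_aux {t s : ℝ} (h : t < s) :
    (1/2 : ℝ≥0∞) ≤ eLpNormEssSup
      (fun x : ℝ => Real.sign (t + x) / (1 + (t + x) ^ 2)
        - Real.sign (s + x) / (1 + (s + x) ^ 2)) volume := by
  set f : ℝ → ℝ := fun x => Real.sign (t + x) / (1 + (t + x) ^ 2)
        - Real.sign (s + x) / (1 + (s + x) ^ 2) with hf
  by_contra hlt
  push_neg at hlt
  rw [eLpNormEssSup] at hlt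
  have hae := ae_lt_of_essSup_lt hlt
  set I : Set ℝ := Set.Ioo (max (-s) (-t-1)) (-t) with hI
  have hImem : ∀ x ∈ I, (1/2 : ℝ≥0∞) ≤ (‖f x‖₊ : ℝ≥0∞) := by
    intro x hx
    obtain ⟨hx1, hx2⟩ := hx
    have hts : t + x < 0 := by linarith
    have hsx : 0 < s + x := by
      have := le_max_left (-s) (-t-1); linarith [lt_of_le_of_lt this hx1]
    have htx1 : -1 < t + x := by
      have := le_max_right (-s) (-t-1); linarith [lt_of_le_of_lt this hx1]
    have hsq : (t + x) ^ 2 < 1 := by nlinarith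
    have hden : (0:ℝ) < 1 + (t + x) ^ 2 := by positivity
    have hden2 : (0:ℝ) < 1 + (s + x) ^ 2 := by positivity
    have h1 : Real.sign (t + x) = -1 := Real.sign_of_neg hts
    have h2 : Real.sign (s + x) = 1 := Real.sign_of_pos hsx
    have hfx : f x = -(1 / (1 + (t + x) ^ 2)) - 1 / (1 + (s + x) ^ 2) := by
      rw [hf]; simp only [h1, h2]; ring
    have hA : (1/2 : ℝ) < 1 / (1 + (t + x) ^ 2) := by
      rw [lt_div_iff₀ hden]; nlinarith
    have hB : (0:ℝ) < 1 / (1 + (s + x) ^ 2) := by positivity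
    have hlow : (1/2 : ℝ) ≤ ‖f x‖ := by
      rw [Real.norm_eq_abs]
      have hneg : (1/2 : ℝ) ≤ -(f x) := by rw [hfx]; linarith
      exact le_abs.mpr (Or.inr hneg)
    calc (1/2 : ℝ≥0∞) = ENNReal.ofReal (1/2) := by
          rw [show (1:ℝ)/2 = (2:ℝ)⁻¹ by norm_num,
            ENNReal.ofReal_inv_of_pos (by norm_num), ENNReal.ofReal_ofNat]
          norm_num
      _ ≤ ENNReal.ofReal ‖f x‖ := ENNReal.ofReal_le_ofReal hlow
      _ = (‖f x‖₊ : ℝ≥0∞) := ofReal_norm_eq_enorm _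
  have hIsub : I ⊆ {x | ¬ ((‖f x‖₊ : ℝ≥0∞) < 1/2)} := fun x hx =>
    not_lt.mpr (hImem x hx)
  have hI0 : volume I = 0 := measure_mono_null hIsub hae
  have hIpos : 0 < volume I := by
    rw [hI, Real.volume_Ioo]
    rw [ENNReal.ofReal_pos]
    have h1 : (-s) < -t := by linarith
    have h2 : (-t-1) < -t := by linarith
    have : max (-s) (-t-1) < -t := max_lt h1 h2
    linarith
  exact hIpos.ne' hI0

private lemma sep {t s : ℝ} (h : t ≠ s) :
    (1/2 : ℝ≥0∞) ≤ eLpNormEssSup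
      (fun x : ℝ => Real.sign (t + x) / (1 + (t + x) ^ 2)
        - Real.sign (s + x) / (1 + (s + x) ^ 2)) volume := by
  rcases h.lt_or_gt with hlt | hlt
  · exact sep_aux hlt
  · rw [ess_swap]
    exact sep_aux hlt

/-- Nonseparability of the family of derivatives in the nonmeasurability example:
for every Lebesgue-null set `N ⊆ ℝ`, the family `{g_t : t ∉ N}`, where
`g_t(x) = sign(t+x)/(1+(t+x)²)`, viewed in `L^∞(ℝ)` (with the essential supremum
distance), admits no countable dense subset. -/
theorem sign_deriv_family_not_separable (Nset : Set ℝ) (hNset : volume Nset = 0) :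
    ¬ ∃ D : Set (ℝ → ℝ), D.Countable ∧
        D ⊆ {g : ℝ → ℝ | ∃ t ∉ Nset, g = fun x => Real.sign (t + x) / (1 + (t + x) ^ 2)} ∧
        ∀ t ∉ Nset, ∀ ε : ℝ≥0∞, 0 < ε → ∃ h ∈ D,
          eLpNormEssSup
            (fun x : ℝ => Real.sign (t + x) / (1 + (t + x) ^ 2) - h x)
            (volume : Measure ℝ) < ε := by
  rintro ⟨D, hDc, _hDsub, hDdense⟩
  have h4 : ∀ t ∉ Nset, ∃ h ∈ D,
      eLpNormEssSup (fun x : ℝ => Real.sign (t + x) / (1 + (t + x) ^ 2) - h x)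
        (volume : Measure ℝ) < 1/4 :=
    fun t ht => hDdense t ht (1/4) (by norm_num)
  choose! f hfD hflt using h4
  have hinj : Set.InjOn f Nsetᶜ := by
    intro t ht s hs hfts
    by_contra hne
    have hsep := sep hne
    have ht' := hflt t ht
    have hs' := hflt s hs
    rw [hfts] at ht'
    have hfun : (fun x : ℝ => Real.sign (t + x) / (1 + (t + x) ^ 2)
          - Real.sign (s + x) / (1 + (s + x) ^ 2)) =
        (fun x : ℝ => Real.sign (t + x) / (1 + (t + x) ^ 2) - f s x) +
        (fun x : ℝ => f s x - Real.sign (s + x) / (1 + (s + x) ^ 2)) := by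
      funext x; simp only [Pi.add_apply]; ring
    have htri : eLpNormEssSup
        (fun x : ℝ => Real.sign (t + x) / (1 + (t + x) ^ 2)
          - Real.sign (s + x) / (1 + (s + x) ^ 2)) volume ≤
        eLpNormEssSup
          (fun x : ℝ => Real.sign (t + x) / (1 + (t + x) ^ 2) - f s x) volume +
        eLpNormEssSup
          (fun x : ℝ => Real.sign (s + x) / (1 + (s + x) ^ 2) - f s x) volume := by
      rw [hfun, ess_swap (fun x : ℝ => Real.sign (s + x) / (1 + (s + x) ^ 2)) (f s)]
      exact eLpNormEssSup_add_le
    have hsum : eLpNormEssSup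
          (fun x : ℝ => Real.sign (t + x) / (1 + (t + x) ^ 2) - f s x) volume +
        eLpNormEssSup
          (fun x : ℝ => Real.sign (s + x) / (1 + (s + x) ^ 2) - f s x) volume
        < 1/4 + 1/4 := ENNReal.add_lt_add ht' hs'
    have hhalf : (1/4 : ℝ≥0∞) + 1/4 = 1/2 := by
      rw [ENNReal.div_add_div_same]
      rw [ENNReal.div_eq_div_iff] <;> norm_num
    rw [hhalf] at hsum
    exact absurd (lt_of_le_of_lt (hsep.trans htri) hsum) (lt_irrefl _)
  have hcnt : (Nsetᶜ : Set ℝ).Countable :=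
    Set.MapsTo.countable_of_injOn (fun t ht => hfD t ht) hinj hDc
  have hc0 : volume (Nsetᶜ : Set ℝ) = 0 := hcnt.measure_zero _
  have huniv : volume (Set.univ : Set ℝ) = 0 := by
    have h : (Set.univ : Set ℝ) = Nset ∪ Nsetᶜ := (Set.union_compl_self Nset).symm
    rw [h]
    exact le_antisymm ((measure_union_le _ _).trans (by rw [hNset, hc0]; simp)) zero_le
  rw [Real.volume_univ] at huniv
  exact ENNReal.top_ne_zero huniv
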